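/- For the half-grid Γₙ (vertices (i,j) with 1 ≤ j ≤ i ≤ n, edges ((i,j),(i−1,j)) and ((i,j),(i,j+1)), sources sᵢ=(i,1), sinks tᵢ=(i,i)), and for every nonempty interval I = [q..r] ⊆ [n], there exists exactly one I-flow, and it passes exactly through the vertices (i,j) with j ≤ i ≤ r and 1 ≤ j ≤ r−q+1. Consequently, for any weighting w with values in a commutative semiring, f_w([q..r]) = ⊙_{j ≤ i ≤ r, 1 ≤ j ≤ r−q+1} w(i,j). -/

import Mathlib

open Finset Classical

/-- The set of (directed) edges traversed by a path, given as its list of vertices. -/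
noncomputable def pathEdges {V : Type} (p : List V) : Finset (V × V) :=
  (p.zip p.tail).toFinset

/-- `p` is a directed path in the edge set `E`: a nonempty list of distinct vertices
consecutive ones being joined by edges of `E`. -/
def IsDirPath {V : Type} (E : Finset (V × V)) (p : List V) : Prop :=
  p ≠ [] ∧ p.Nodup ∧ p.Chain' (fun u v => (u, v) ∈ E)

/-- The set of edges used by a family of paths. -/
noncomputable def famEdges {V : Type} (Φ : Finset (List V)) : Finset (V × V) :=
  Φ.biUnion pathEdges

/-- The set of vertices used by a family of paths. -/
noncomputable def flowVerts {V : Type} (Φ : Finset (List V)) : Finset V :=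
  Φ.biUnion List.toFinset

/-- A family of pairwise vertex-disjoint directed paths in `E`. -/
def IsPathFamily {V : Type} (E : Finset (V × V)) (Φ : Finset (List V)) : Prop :=
  (∀ p ∈ Φ, IsDirPath E p) ∧
  ∀ p ∈ Φ, ∀ q ∈ Φ, p ≠ q → ∀ v, v ∈ p → v ∉ q

/-- A network: a finite directed edge set on `V` with `n` sources and `n` sinks. -/
structure Network (n : ℕ) (V : Type) where
  E : Finset (V × V)
  src : Fin n → V
  snk : Fin n → V

/-- The edge set `E` is acyclic: no directed cycle. -/
def AcyclicE {V : Type} (E : Finset (V × V)) : Prop :=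
  ∀ v : V, ¬ Relation.TransGen (fun a b => (a, b) ∈ E) v v

/-- An `I`-flow in the network `N`: a family of `|I|` pairwise vertex-disjoint directed
paths from the sources indexed by `I` to the first `|I|` sinks. -/
def IsFlow {V : Type} {n : ℕ} (N : Network n V) (I : Finset (Fin n))
    (Φ : Finset (List V)) : Prop :=
  IsPathFamily N.E Φ ∧ Φ.card = I.card ∧
  (∀ p ∈ Φ, (∃ i ∈ I, p.head? = some (N.src i)) ∧
            (∃ k : Fin n, k.1 < I.card ∧ p.getLast? = some (N.snk k))) ∧
  (∀ i ∈ I, ∃ p ∈ Φ, p.head? = some (N.src i)) ∧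
  (∀ k : Fin n, k.1 < I.card → ∃ p ∈ Φ, p.getLast? = some (N.snk k))

/-- The flow-generated function over a commutative semiring determined by the vertex
weighting `w`: `f(I) = ⊕_{φ ∈ Φ_I} ⊙_{v ∈ V_φ} w(v)`. -/
noncomputable def flowGen {V : Type} {S : Type} [CommSemiring S] {n : ℕ}
    (N : Network n V) (w : V → S) (I : Finset (Fin n)) : S :=
  ∑ᶠ (Φ : Finset (List V)) (_ : IsFlow N I Φ), ∏ v ∈ flowVerts Φ, w v

/-- The in-degree of a vertex. -/
noncomputable def indeg {V : Type} (E : Finset (V × V)) (v : V) : ℕ :=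
  (E.filter (fun e => e.2 = v)).card

/-- The out-degree of a vertex. -/
noncomputable def outdeg {V : Type} (E : Finset (V × V)) (v : V) : ℕ :=
  (E.filter (fun e => e.1 = v)).card

/-- Degree of `v` in the edge set `D` (underlying undirected multigraph). -/
noncomputable def deg {V : Type} (D : Finset (V × V)) (v : V) : ℕ :=
  indeg D v + outdeg D v

/-- A walk through the symmetric difference in which `F`-edges (of the first flow) are
traversed forwardly and `B`-edges (of the second flow) backwardly: this expresses that
edges of the two flows are oppositely directed along the walk. -/
def Traverses {V : Type} (F B : Finset (V × V)) (w : List V) : Prop :=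
  w.Chain' (fun u v => (u, v) ∈ F ∨ (v, u) ∈ B)

/-- The set of (directed) edges of `F ∪ B` used by a traversal `w`. -/
noncomputable def travEdges {V : Type} (F B : Finset (V × V)) (w : List V) :
    Finset (V × V) :=
  ((w.zip w.tail).map (fun e => if (e.1, e.2) ∈ F then (e.1, e.2) else (e.2, e.1))).toFinset

/-- A circuit: a closed walk on at least two vertices with distinct inner vertices. -/
def IsCircuitList {V : Type} (w : List V) : Prop :=
  2 ≤ w.length ∧ w.head? = w.getLast? ∧ w.tail.Nodup

/-- A simple (undirected) path on at least two vertices. -/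
def IsSimplePathList {V : Type} (w : List V) : Prop :=
  2 ≤ w.length ∧ w.Nodup

/-- `comps` is a decomposition of the edge set `F ∪ B` (the symmetric difference of two
flows, `F` the edges of the first and `B` of the second) into pairwise vertex-disjoint
circuits and simple paths, along each of which `F`-edges and `B`-edges are oppositely
directed. -/
def IsDecomp {V : Type} (F B : Finset (V × V)) (comps : Finset (List V)) : Prop :=
  (∀ w ∈ comps, Traverses F B w ∧ (IsCircuitList w ∨ IsSimplePathList w)) ∧
  (∀ w ∈ comps, ∀ w' ∈ comps, w ≠ w' → ∀ v, v ∈ w → v ∉ w') ∧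
  (∀ e : V × V, (e ∈ F ∨ e ∈ B) ↔ ∃ w ∈ comps, e ∈ travEdges F B w)

/-- Number of circuits in a decomposition. -/
noncomputable def circCount {V : Type} (comps : Finset (List V)) : ℕ :=
  (comps.filter (fun w => IsCircuitList w)).card

/-- The double flow `ξ = χ^{E_φ} + χ^{E_{φ'}}` of two flows, as a multiplicity
function on edges. -/
noncomputable def dbl {V : Type} (φ φ' : Finset (List V)) : V × V → ℕ :=
  fun e => (if e ∈ famEdges φ then 1 else 0) + (if e ∈ famEdges φ' then 1 else 0)

/-- The order preserving bijection `γ_Y : [p+q] → Y` (with junk value outside `[p+q]`,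
`[p+q] = {1,…,p+q}` being 1-indexed). -/
noncomputable def gammaFn {n : ℕ} (p q : ℕ) (Y : Finset (Fin n)) (hY : Y.card = p + q)
    (hpos : 0 < p + q) (a : ℕ) : Fin n :=
  if h : a - 1 < p + q then (Y.orderIsoOfFin hY ⟨a - 1, h⟩ : Fin n)
  else (Y.orderIsoOfFin hY ⟨0, hpos⟩ : Fin n)

/-- The image `γ_Y(A) ⊆ Y` of a subset `A ⊆ [p+q]`. -/
noncomputable def gammaSet {n : ℕ} (p q : ℕ) (Y : Finset (Fin n)) (hY : Y.card = p + q)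
    (hpos : 0 < p + q) (A : Finset ℕ) : Finset (Fin n) :=
  A.image (gammaFn p q Y hY hpos)

/-- The network is in modified (vertex-split) form with split-edge set `split`:
each non-terminal vertex is incident with exactly one split-edge, whose head (tail) has
in-degree (out-degree) one, and each terminal vertex has exactly one incident edge. -/
def IsModified {V : Type} {n : ℕ} (N : Network n V) (split : Finset (V × V)) : Prop :=
  split ⊆ N.E ∧
  (∀ v : V, (¬ ∃ i : Fin n, v = N.src i ∨ v = N.snk i) →
      deg split v = 1 ∧
      (∀ e ∈ split, e.2 = v → indeg N.E v = 1) ∧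
      (∀ e ∈ split, e.1 = v → outdeg N.E v = 1)) ∧
  (∀ i : Fin n, deg N.E (N.src i) = 1 ∧ deg N.E (N.snk i) = 1)

/-- An undirected edge. -/
def UndirEdge {V : Type} (E : Finset (V × V)) (u v : V) : Prop :=
  (u, v) ∈ E ∨ (v, u) ∈ E

/-- An undirected simple path. -/
def UPath {V : Type} (E : Finset (V × V)) (w : List V) : Prop :=
  w ≠ [] ∧ w.Nodup ∧ w.Chain' (UndirEdge E)

/-- Position of a terminal vertex in the boundary order `sₙ,…,s₁,t₁,…,tₙ`. -/
def bpos {V : Type} {n : ℕ} (N : Network n V) (v : V) (k : ℕ) : Prop :=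
  (∃ i : Fin n, v = N.src i ∧ k = n - 1 - i.1) ∨ (∃ j : Fin n, v = N.snk j ∧ k = n + j.1)

/-- Combinatorial abstraction of planarity with all terminals on the outer boundary in
the order `sₙ,…,s₁,t₁,…,tₙ`: two vertex-disjoint undirected paths joining terminals
cannot have interleaved (crossing) endpoints in the boundary order. -/
def NonCrossing {V : Type} {n : ℕ} (N : Network n V) : Prop :=
  ∀ w w' : List V, UPath N.E w → UPath N.E w' → (∀ v ∈ w, v ∉ w') →
    ∀ a b c d : V, ∀ ka kb kc kd : ℕ,
      w.head? = some a → w.getLast? = some b →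
      w'.head? = some c → w'.getLast? = some d →
      bpos N a ka → bpos N b kb → bpos N c kc → bpos N d kd →
      ¬ (ka < kc ∧ kc < kb ∧ kb < kd)

/-- The half-grid `Γₙ` (0-indexed encoding of the 1-indexed vertices `(i,j)`,
`1 ≤ j ≤ i ≤ n`): vertices `(i,j)` with `j ≤ i`, edges `(i,j) → (i-1,j)` and
`(i,j) → (i,j+1)` (staying in the half-grid), sources `sᵢ = (i,1)`, sinks `tᵢ = (i,i)`. -/
def gridN (n : ℕ) : Network n (Fin n × Fin n) where
  E := Finset.univ.filter (fun e : (Fin n × Fin n) × (Fin n × Fin n) =>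
        e.1.2.1 ≤ e.1.1.1 ∧
        ((e.2.1.1 + 1 = e.1.1.1 ∧ e.2.2 = e.1.2 ∧ e.1.2.1 ≤ e.2.1.1) ∨
         (e.2.1 = e.1.1 ∧ e.2.2.1 = e.1.2.1 + 1 ∧ e.2.2.1 ≤ e.1.1.1)))
  src := fun i => (i, ⟨0, i.pos⟩)
  snk := fun i => (i, i)

/-- The interval `[a..b] ⊆ [n]` regarded as a set of indices in `Fin n` (1-indexed). -/
def intv (n a b : ℕ) : Finset (Fin n) :=
  Finset.univ.filter (fun k => a ≤ k.1 + 1 ∧ k.1 + 1 ≤ b)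

/-- The rectangle of (1-indexed) vertices `(i,j)` with `j ≤ i ≤ r`, `1 ≤ j ≤ r-a+1`. -/
def rect (n a r : ℕ) : Finset (Fin n × Fin n) :=
  Finset.univ.filter (fun v => v.2.1 ≤ v.1.1 ∧ v.1.1 + 1 ≤ r ∧ v.2.1 + 1 ≤ r - a + 1)
theorem List.chain'_iff_get {α : Type*} {R : α → α → Prop} {l : List α} :
    List.Chain' R l ↔ ∀ (i : ℕ) (h : i < l.length - 1),
      R (l.get ⟨i, by omega⟩) (l.get ⟨i + 1, by omega⟩) := by
  show List.IsChain R l ↔ _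
  rw [List.isChain_iff_getElem]
  constructor
  · intro h i hi; exact h i (by omega)
  · intro h i hi; exact h i (by omega)

theorem List.chain'_cons {α : Type*} {R : α → α → Prop} {x y : α} {l : List α} :
    List.Chain' R (x :: y :: l) ↔ R x y ∧ List.Chain' R (y :: l) :=
  List.isChain_cons_cons (R := R)

section GridAux

variable {n : ℕ}

/-- potential function: strictly decreases by 1 along grid edges -/
def fvv {n : ℕ} (v : Fin n × Fin n) : ℕ := v.1.1 - v.2.1

lemma vert_ext {u v : Fin n × Fin n} (hh1 : u.1.1 = v.1.1) (hh2 : u.2.1 = v.2.1) : u = v := by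
  cases u; cases v; simp_all [Prod.ext_iff, Fin.ext_iff]

lemma stepE_iff {u v : Fin n × Fin n} :
    ((u, v) ∈ (gridN n).E) ↔ (u.2.1 ≤ u.1.1 ∧
      ((v.1.1 + 1 = u.1.1 ∧ v.2.1 = u.2.1 ∧ u.2.1 ≤ v.1.1) ∨
       (v.1.1 = u.1.1 ∧ v.2.1 = u.2.1 + 1 ∧ v.2.1 ≤ u.1.1))) := by
  simp [gridN, Finset.mem_filter, Prod.ext_iff, Fin.ext_iff]

lemma step_facts {u v : Fin n × Fin n} (h : (u, v) ∈ (gridN n).E) :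
    u.2.1 ≤ u.1.1 ∧ v.2.1 ≤ v.1.1 ∧ v.1.1 ≤ u.1.1 ∧ u.2.1 ≤ v.2.1 ∧ v.2.1 ≤ u.2.1 + 1 ∧
      u.1.1 - u.2.1 = (v.1.1 - v.2.1) + 1 := by
  rw [stepE_iff] at h; omega

lemma step_cases {u v : Fin n × Fin n} (h : (u, v) ∈ (gridN n).E) :
    (u.1.1 = v.1.1 + 1 ∧ u.2.1 = v.2.1) ∨ (u.1.1 = v.1.1 ∧ v.2.1 = u.2.1 + 1) := by
  rw [stepE_iff] at h; omega

lemma chain_get_facts {p : List (Fin n × Fin n)}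
    (hp : p.Chain' (fun u v => (u, v) ∈ (gridN n).E)) :
    ∀ (j i : ℕ) (hi : i < p.length) (hj : j < p.length), i ≤ j →
      fvv (p.get ⟨i, hi⟩) = fvv (p.get ⟨j, hj⟩) + (j - i) ∧
      (p.get ⟨i, hi⟩).2.1 ≤ (p.get ⟨j, hj⟩).2.1 ∧
      (p.get ⟨j, hj⟩).1.1 ≤ (p.get ⟨i, hi⟩).1.1 := by
  intro j
  induction j with
  | zero =>
    intro i hi hj hij
    have : i = 0 := by omega
    subst this
    simp
  | succ j ih =>
    intro i hi hj hij
    rcases Nat.eq_or_lt_of_le hij with heq | hlt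
    · subst heq; simp
    · have hj' : j < p.length := by omega
      obtain ⟨f1, f2, f3⟩ := ih i hi hj' (by omega)
      have hstep := List.chain'_iff_get.mp hp j (by omega)
      have hf := step_facts hstep
      unfold fvv at *
      omega

lemma head?_some_iff {α : Type*} {p : List α} {u : α} :
    p.head? = some u ↔ ∃ h : 0 < p.length, p.get ⟨0, h⟩ = u := by
  cases p with
  | nil => simp
  | cons x xs => simp [eq_comm]

lemma getLast?_some_iff {α : Type*} {p : List α} {u : α} :
    p.getLast? = some u ↔ ∃ h : 0 < p.length, p.get ⟨p.length - 1, by omega⟩ = u := by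
  rw [List.getLast?_eq_getElem?]
  constructor
  · intro h
    have h2 := List.getElem?_eq_some_iff.mp h
    obtain ⟨hlt, hg⟩ := h2
    exact ⟨by omega, by simpa [List.get_eq_getElem] using hg⟩
  · rintro ⟨h0, hg⟩
    rw [List.getElem?_eq_some_iff]
    exact ⟨by omega, by simpa [List.get_eq_getElem] using hg⟩

end GridAux
section GridAux2

variable {n : ℕ}

lemma path_mem_facts {p : List (Fin n × Fin n)}
    (hp : p.Chain' (fun u v => (u, v) ∈ (gridN n).E))
    {u z v : Fin n × Fin n} (hu : p.head? = some u) (hz : p.getLast? = some z)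
    (hv : v ∈ p) :
    u.2.1 ≤ v.2.1 ∧ v.2.1 ≤ z.2.1 ∧ z.1.1 ≤ v.1.1 ∧ v.1.1 ≤ u.1.1 := by
  obtain ⟨h0, hu0⟩ := head?_some_iff.mp hu
  obtain ⟨_, hz0⟩ := getLast?_some_iff.mp hz
  obtain ⟨iv, hiv⟩ := List.mem_iff_get.mp hv
  have f1 := chain_get_facts hp iv.1 0 h0 iv.2 (by omega)
  have f2 := chain_get_facts hp (p.length - 1) iv.1 iv.2 (by omega) (by omega)
  rw [hu0] at f1
  rw [hz0] at f2
  rw [show (⟨iv.1, iv.2⟩ : Fin p.length) = iv from rfl, hiv] at f1 f2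
  exact ⟨f1.2.1, f2.2.1, f2.2.2, f1.2.2⟩

lemma path_len {p : List (Fin n × Fin n)}
    (hp : p.Chain' (fun u v => (u, v) ∈ (gridN n).E))
    {u z : Fin n × Fin n} (hu : p.head? = some u) (hz : p.getLast? = some z) :
    fvv u = fvv z + (p.length - 1) := by
  obtain ⟨h0, hu0⟩ := head?_some_iff.mp hu
  obtain ⟨_, hz0⟩ := getLast?_some_iff.mp hz
  have f1 := chain_get_facts hp (p.length - 1) 0 h0 (by omega) (by omega)
  rw [hu0, hz0] at f1
  omega

lemma eq_last_of_fvv_le {p : List (Fin n × Fin n)}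
    (hp : p.Chain' (fun u v => (u, v) ∈ (gridN n).E))
    {z v : Fin n × Fin n} (hz : p.getLast? = some z) (hv : v ∈ p)
    (hle : fvv v ≤ fvv z) : v = z := by
  obtain ⟨h0, hz0⟩ := getLast?_some_iff.mp hz
  obtain ⟨iv, hiv⟩ := List.mem_iff_get.mp hv
  have f2 := chain_get_facts hp (p.length - 1) iv.1 iv.2 (by omega) (by omega)
  rw [hz0, show (⟨iv.1, iv.2⟩ : Fin p.length) = iv from rfl, hiv] at f2
  have : iv.1 = p.length - 1 := by omega
  rw [← hiv, ← hz0]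
  congr 1
  exact Fin.ext this

lemma fvv_lt_head {p : List (Fin n × Fin n)}
    (hp : p.Chain' (fun u v => (u, v) ∈ (gridN n).E))
    {u v : Fin n × Fin n} (hu : p.head? = some u) (hv : v ∈ p) (hne : v ≠ u) :
    fvv v + 1 ≤ fvv u := by
  obtain ⟨h0, hu0⟩ := head?_some_iff.mp hu
  obtain ⟨iv, hiv⟩ := List.mem_iff_get.mp hv
  have f1 := chain_get_facts hp iv.1 0 h0 iv.2 (by omega)
  rw [hu0, show (⟨iv.1, iv.2⟩ : Fin p.length) = iv from rfl, hiv] at f1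
  have hiv0 : iv.1 ≠ 0 := by
    intro h
    apply hne
    rw [← hiv, ← hu0]
    congr 1
    exact Fin.ext h
  omega

lemma path_nodup {p : List (Fin n × Fin n)}
    (hp : p.Chain' (fun u v => (u, v) ∈ (gridN n).E)) : p.Nodup := by
  rw [List.nodup_iff_injective_get]
  intro i j hij
  rcases le_or_gt i.1 j.1 with h | h
  · have f := chain_get_facts hp j.1 i.1 i.2 j.2 h
    rw [show (⟨i.1, i.2⟩ : Fin p.length) = i from rfl,
      show (⟨j.1, j.2⟩ : Fin p.length) = j from rfl, hij] at f
    exact Fin.ext (by omega)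
  · have f := chain_get_facts hp i.1 j.1 j.2 i.2 (by omega)
    rw [show (⟨i.1, i.2⟩ : Fin p.length) = i from rfl,
      show (⟨j.1, j.2⟩ : Fin p.length) = j from rfl, hij] at f
    exact Fin.ext (by omega)

lemma chain_eq_of_toFinset_eq :
    ∀ (p q : List (Fin n × Fin n)),
      p.Chain' (fun u v => (u, v) ∈ (gridN n).E) →
      q.Chain' (fun u v => (u, v) ∈ (gridN n).E) →
      p.toFinset = q.toFinset → p = q := by
  intro p
  induction p with
  | nil =>
    intro q _ _ h
    simp only [List.toFinset_nil] at h
    exact ((List.toFinset_eq_empty_iff q).mp h.symm).symm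
  | cons u p' ih =>
    intro q hp hq h
    cases q with
    | nil =>
      exfalso
      simp only [List.toFinset_nil] at h
      have : u ∈ (u :: p').toFinset := by simp
      rw [h] at this
      simp at this
    | cons v q' =>
      have huq : u ∈ v :: q' := by
        rw [← List.mem_toFinset, ← h]; simp
      have hvp : v ∈ u :: p' := by
        rw [← List.mem_toFinset, h]; simp
      have huv : u = v := by
        by_contra hne
        have h1 := fvv_lt_head hq (by simp) huq hne
        have h2 := fvv_lt_head hp (by simp) hvp (Ne.symm hne)
        omega
      subst huv
      have hnp : (u :: p').Nodup := path_nodup hp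
      have hnq : (u :: q').Nodup := path_nodup hq
      have hup' : u ∉ p' := (List.nodup_cons.mp hnp).1
      have huq' : u ∉ q' := (List.nodup_cons.mp hnq).1
      have h' : p'.toFinset = q'.toFinset := by
        ext x
        constructor
        · intro hx
          have : x ∈ (u :: p').toFinset := by simp [List.mem_toFinset.mp hx]
          rw [h] at this
          simp only [List.toFinset_cons, Finset.mem_insert] at this
          rcases this with h1 | h1
          · exact absurd (h1 ▸ List.mem_toFinset.mp hx) hup'
          · exact h1
        · intro hx
          have : x ∈ (u :: q').toFinset := by simp [List.mem_toFinset.mp hx]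
          rw [← h] at this
          simp only [List.toFinset_cons, Finset.mem_insert] at this
          rcases this with h1 | h1
          · exact absurd (h1 ▸ List.mem_toFinset.mp hx) huq'
          · exact h1
      rw [ih q' hp.tail hq.tail h']

lemma exists_pred :
    ∀ (p : List (Fin n × Fin n)),
      p.Chain' (fun u v => (u, v) ∈ (gridN n).E) →
      ∀ v, v ∈ p → p.head? ≠ some v → ∃ w ∈ p, (w, v) ∈ (gridN n).E := by
  intro p
  induction p with
  | nil => simp
  | cons u rest ih =>
    intro hp v hv hne
    rcases List.mem_cons.mp hv with h | h
    · exact absurd (by simp [h]) hne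
    · cases rest with
      | nil => simp at h
      | cons u' rest' =>
        by_cases hvu : v = u'
        · subst hvu
          exact ⟨u, by simp, (List.chain'_cons.mp hp).1⟩
        · obtain ⟨w, hw, hs⟩ := ih hp.tail v h (by simpa using Ne.symm hvu)
          exact ⟨w, List.mem_cons_of_mem _ hw, hs⟩

lemma exists_col_entry :
    ∀ (p : List (Fin n × Fin n)),
      p.Chain' (fun u v => (u, v) ∈ (gridN n).E) →
      ∀ u, p.head? = some u → ∀ k, u.2.1 < k → ∀ v ∈ p, k ≤ v.2.1 →
      ∃ w z, w ∈ p ∧ z ∈ p ∧ (w, z) ∈ (gridN n).E ∧ w.2.1 < k ∧ k ≤ z.2.1 := by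
  intro p
  induction p with
  | nil => simp
  | cons x xs ih =>
    intro hp u hu k hk v hv hkv
    have hux : u = x := by simpa [eq_comm] using hu
    subst hux
    rcases List.mem_cons.mp hv with h | h
    · subst h; omega
    · cases xs with
      | nil => simp at h
      | cons x' xs' =>
        by_cases hx' : k ≤ x'.2.1
        · exact ⟨u, x', by simp, by simp, (List.chain'_cons.mp hp).1, hk, hx'⟩
        · obtain ⟨w, z, hw, hz, hs, hw1, hz1⟩ :=
            ih hp.tail x' rfl k (by omega) v h hkv
          exact ⟨w, z, List.mem_cons_of_mem _ hw, List.mem_cons_of_mem _ hz, hs, hw1, hz1⟩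

lemma colrow_mem {p : List (Fin n × Fin n)}
    (hp : p.Chain' (fun u v => (u, v) ∈ (gridN n).E))
    {z v : Fin n × Fin n} (hz : p.getLast? = some z) (hzz : z.2.1 ≤ z.1.1)
    (hv : v ∈ p) : v.2.1 ≤ v.1.1 := by
  obtain ⟨h0, hz0⟩ := getLast?_some_iff.mp hz
  obtain ⟨iv, hiv⟩ := List.mem_iff_get.mp hv
  by_cases hlast : iv.1 = p.length - 1
  · have hvz : v = z := by
      rw [← hiv, ← hz0]; congr 1; exact Fin.ext hlast
    rw [hvz]; exact hzz
  · have hstep := List.chain'_iff_get.mp hp iv.1 (by omega)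
    have hf := step_facts hstep
    rw [show (⟨iv.1, by omega⟩ : Fin p.length) = iv from Fin.ext rfl, hiv] at hf
    exact hf.1

end GridAux2
section GridHook

variable {n : ℕ}

/-- vertex function for the hook path of sink `k`: source `(a-1+k, 0)`,
right to `(a-1+k, k)`, then up to `(k, k)`. -/
def gf (n a k : ℕ) (ha : 1 ≤ a) (h : a + k ≤ n) (t : Fin (a + k)) : Fin n × Fin n :=
  (⟨a - 1 + k - (t.1 - k), by omega⟩, ⟨min t.1 k, by have := t.2; omega⟩)

/-- The hook path (total function; junk `[]` outside the valid range). -/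
def hook (n a k : ℕ) : List (Fin n × Fin n) :=
  if h : 1 ≤ a ∧ a + k ≤ n then List.ofFn (gf n a k h.1 h.2) else []

variable {a k : ℕ} (ha : 1 ≤ a) (hak : a + k ≤ n)

include ha hak

lemma hook_eq : hook n a k = List.ofFn (gf n a k ha hak) := dif_pos ⟨ha, hak⟩

lemma hook_length : (hook n a k).length = a + k := by
  rw [hook_eq ha hak]; simp

lemma hook_mem {v : Fin n × Fin n} :
    v ∈ hook n a k ↔ ((v.1.1 = a - 1 + k ∧ v.2.1 ≤ k) ∨
      (v.2.1 = k ∧ k ≤ v.1.1 ∧ v.1.1 ≤ a - 1 + k)) := by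
  rw [hook_eq ha hak, List.mem_ofFn]
  constructor
  · rintro ⟨t, rfl⟩
    have ht := t.2
    simp only [gf]
    omega
  · rintro (⟨hr, hc⟩ | ⟨hc, hl1, hl2⟩)
    · refine ⟨⟨v.2.1, by omega⟩, vert_ext ?_ ?_⟩ <;> simp only [gf] <;> omega
    · refine ⟨⟨k + (a - 1 + k - v.1.1), by omega⟩, vert_ext ?_ ?_⟩ <;>
        simp only [gf] <;> omega

lemma hook_head? :
    (hook n a k).head? = some (⟨a - 1 + k, by omega⟩, ⟨0, by omega⟩) := by
  rw [hook_eq ha hak, head?_some_iff]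
  refine ⟨by simp; omega, ?_⟩
  rw [List.get_ofFn]
  apply vert_ext <;> simp [gf]

lemma hook_getLast? :
    (hook n a k).getLast? = some (⟨k, by omega⟩, ⟨k, by omega⟩) := by
  rw [hook_eq ha hak, getLast?_some_iff]
  refine ⟨by simp; omega, ?_⟩
  rw [List.get_ofFn]
  apply vert_ext <;> simp [gf] <;> omega

lemma hook_chain' :
    (hook n a k).Chain' (fun u v => (u, v) ∈ (gridN n).E) := by
  rw [hook_eq ha hak, List.chain'_iff_get]
  intro i hi
  rw [List.get_ofFn, List.get_ofFn, stepE_iff]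
  simp only [List.length_ofFn] at hi
  simp only [gf, Fin.coe_cast]
  omega

end GridHook
section GridFlow0

variable {n a r : ℕ}

lemma mem_intv {i : Fin n} : i ∈ intv n a r ↔ a ≤ i.1 + 1 ∧ i.1 + 1 ≤ r := by
  simp [intv]

lemma mem_rect {v : Fin n × Fin n} :
    v ∈ rect n a r ↔ v.2.1 ≤ v.1.1 ∧ v.1.1 + 1 ≤ r ∧ v.2.1 + 1 ≤ r - a + 1 := by
  simp [rect]

/-- the canonical (unique) flow -/
def Phi0 (n a r : ℕ) : Finset (List (Fin n × Fin n)) :=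
  (Finset.range (r + 1 - a)).image (hook n a)

lemma mem_Phi0 (hr2 : a ≤ r) {p : List (Fin n × Fin n)} :
    p ∈ Phi0 n a r ↔ ∃ k ≤ r - a, p = hook n a k := by
  simp only [Phi0, Finset.mem_image, Finset.mem_range]
  constructor
  · rintro ⟨k, hk, he⟩
    refine ⟨k, ?_, he.symm⟩
    omega
  · rintro ⟨k, hk, he⟩
    refine ⟨k, ?_, he.symm⟩
    omega

lemma src_eq (i : Fin n) : (gridN n).src i = (i, ⟨0, i.pos⟩) := rfl

lemma snk_eq (i : Fin n) : (gridN n).snk i = (i, i) := rfl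

variable (hr1 : 1 ≤ a) (hr2 : a ≤ r) (hr3 : r ≤ n)

include hr1 hr2 hr3

lemma card_intv : (intv n a r).card = r + 1 - a := by
  have he : intv n a r =
      (Finset.range (r + 1 - a)).image (fun j => (⟨min (a - 1 + j) (n - 1), by omega⟩ : Fin n)) := by
    ext i
    simp only [mem_intv, Finset.mem_image, Finset.mem_range, Fin.ext_iff]
    constructor
    · rintro ⟨ha1, ha2⟩
      exact ⟨i.1 + 1 - a, by omega, by have := i.2; omega⟩
    · rintro ⟨j, hj, he⟩
      omega
  rw [he, Finset.card_image_of_injOn, Finset.card_range]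
  intro x hx y hy hxy
  simp only [Finset.coe_range, Set.mem_Iio] at hx hy
  simp only [Fin.mk.injEq] at hxy
  omega

lemma hook_inj {k k' : ℕ} (hk : k ≤ r - a) (hk' : k' ≤ r - a)
    (h : hook n a k = hook n a k') : k = k' := by
  have e1 := hook_head? hr1 (show a + k ≤ n by omega)
  have e2 := hook_head? hr1 (show a + k' ≤ n by omega)
  rw [h, e2] at e1
  have h2 := (Prod.ext_iff.mp (Option.some.inj e1)).1
  have h3 : a - 1 + k' = a - 1 + k := congrArg Fin.val h2
  omega

lemma card_Phi0 : (Phi0 n a r).card = r + 1 - a := by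
  rw [Phi0, Finset.card_image_of_injOn, Finset.card_range]
  intro x hx y hy hxy
  simp only [Finset.coe_range, Set.mem_Iio] at hx hy
  exact hook_inj hr1 hr2 hr3 (by omega) (by omega) hxy

lemma isflow_Phi0 : IsFlow (gridN n) (intv n a r) (Phi0 n a r) := by
  refine ⟨⟨?_, ?_⟩, ?_, ?_, ?_, ?_⟩
  · -- paths
    intro p hp
    obtain ⟨k, hk, rfl⟩ := (mem_Phi0 hr2).mp hp
    have hak : a + k ≤ n := by omega
    refine ⟨?_, path_nodup (hook_chain' hr1 hak), hook_chain' hr1 hak⟩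
    have := hook_length hr1 hak
    intro hnil
    rw [hnil] at this
    simp at this
    omega
  · -- disjoint
    intro p hp q hq hne v hvp hvq
    obtain ⟨k, hk, rfl⟩ := (mem_Phi0 hr2).mp hp
    obtain ⟨k', hk', rfl⟩ := (mem_Phi0 hr2).mp hq
    have hkk : k ≠ k' := fun h => hne (by rw [h])
    have m1 := (hook_mem hr1 (show a + k ≤ n by omega)).mp hvp
    have m2 := (hook_mem hr1 (show a + k' ≤ n by omega)).mp hvq
    omega
  · rw [card_Phi0 hr1 hr2 hr3, card_intv hr1 hr2 hr3]
  · -- heads and lasts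
    intro p hp
    obtain ⟨k, hk, rfl⟩ := (mem_Phi0 hr2).mp hp
    have hak : a + k ≤ n := by omega
    constructor
    · refine ⟨⟨a - 1 + k, by omega⟩,
        mem_intv.mpr ⟨show a ≤ a - 1 + k + 1 by omega, show a - 1 + k + 1 ≤ r by omega⟩, ?_⟩
      rw [hook_head? hr1 hak, src_eq]
    · refine ⟨⟨k, by omega⟩, by rw [card_intv hr1 hr2 hr3]; show k < r + 1 - a; omega, ?_⟩
      rw [hook_getLast? hr1 hak, snk_eq]
  · -- all sources
    intro i hi
    obtain ⟨ha1, ha2⟩ := mem_intv.mp hi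
    refine ⟨hook n a (i.1 + 1 - a), (mem_Phi0 hr2).mpr ⟨i.1 + 1 - a, by omega, rfl⟩, ?_⟩
    rw [hook_head? (k := i.1 + 1 - a) hr1 (by omega), src_eq]
    exact congrArg some (vert_ext (show a - 1 + (i.1 + 1 - a) = i.1 by omega) rfl)
  · -- all sinks
    intro kf hkf
    rw [card_intv hr1 hr2 hr3] at hkf
    refine ⟨hook n a kf.1, (mem_Phi0 hr2).mpr ⟨kf.1, by omega, rfl⟩, ?_⟩
    rw [hook_getLast? (k := kf.1) hr1 (by omega), snk_eq]

lemma flowVerts_Phi0 : flowVerts (Phi0 n a r) = rect n a r := by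
  ext v
  simp only [flowVerts, Finset.mem_biUnion, List.mem_toFinset, mem_rect]
  constructor
  · rintro ⟨p, hp, hv⟩
    obtain ⟨k, hk, rfl⟩ := (mem_Phi0 hr2).mp hp
    have m1 := (hook_mem hr1 (show a + k ≤ n by omega)).mp hv
    omega
  · intro hv
    by_cases hcase : v.1.1 ≤ a - 1 + v.2.1
    · refine ⟨hook n a v.2.1, (mem_Phi0 hr2).mpr ⟨v.2.1, by omega, rfl⟩, ?_⟩
      exact (hook_mem hr1 (by omega)).mpr (Or.inr ⟨rfl, hv.1, hcase⟩)
    · refine ⟨hook n a (v.1.1 + 1 - a), (mem_Phi0 hr2).mpr ⟨v.1.1 + 1 - a, by omega, rfl⟩, ?_⟩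
      exact (hook_mem hr1 (by omega)).mpr (Or.inl ⟨by omega, by omega⟩)

end GridFlow0
section GridFlowAny

variable {n a r : ℕ} (hr1 : 1 ≤ a) (hr2 : a ≤ r) (hr3 : r ≤ n)
variable {Φ : Finset (List (Fin n × Fin n))} (hF : IsFlow (gridN n) (intv n a r) Φ)

include hr1 hr2 hr3 hF

lemma flow_path_facts {p : List (Fin n × Fin n)} (hp : p ∈ Φ) :
    ∃ (ip kp : Fin n), ip ∈ intv n a r ∧ kp.1 < r + 1 - a ∧
      p.head? = some (ip, ⟨0, ip.pos⟩) ∧ p.getLast? = some (kp, kp) ∧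
      p.length = ip.1 + 1 := by
  obtain ⟨⟨ip, hip, hh⟩, ⟨kp, hkp, hl⟩⟩ := hF.2.2.1 p hp
  obtain ⟨hne, hnd, hch⟩ := hF.1.1 p hp
  rw [src_eq] at hh
  rw [snk_eq] at hl
  have hlen := path_len hch hh hl
  have hpos : 0 < p.length := List.length_pos_iff.mpr hne
  rw [card_intv hr1 hr2 hr3] at hkp
  refine ⟨ip, kp, hip, hkp, hh, hl, ?_⟩
  simp only [fvv] at hlen
  simp at hlen
  omega

lemma flowVerts_sub_rect : flowVerts Φ ⊆ rect n a r := by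
  intro v hv
  simp only [flowVerts, Finset.mem_biUnion, List.mem_toFinset] at hv
  obtain ⟨p, hp, hvp⟩ := hv
  obtain ⟨ip, kp, hip, hkp, hh, hl, _⟩ := flow_path_facts hr1 hr2 hr3 hF hp
  obtain ⟨_, hnd, hch⟩ := hF.1.1 p hp
  have mf := path_mem_facts hch hh hl hvp
  have cr := colrow_mem hch hl (by simp) hvp
  obtain ⟨hia, hib⟩ := mem_intv.mp hip
  simp only [mem_rect]
  simp at mf
  omega

lemma card_flowVerts : (flowVerts Φ).card = ∑ i ∈ intv n a r, (i.1 + 1) := by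
  have hdis : ∀ p ∈ Φ, ∀ q ∈ Φ, p ≠ q → Disjoint p.toFinset q.toFinset := by
    intro p hp q hq hne
    rw [Finset.disjoint_left]
    intro v hv1 hv2
    exact hF.1.2 p hp q hq hne v (List.mem_toFinset.mp hv1) (List.mem_toFinset.mp hv2)
  have hfv : flowVerts Φ = Φ.biUnion List.toFinset :=
    Finset.ext (fun v => by simp [flowVerts])
  rw [hfv, Finset.card_biUnion hdis]
  have hnn : ∀ p ∈ Φ, p ≠ [] := fun p hp => (hF.1.1 p hp).1
  refine Finset.sum_bij (fun p hp => (p.head (hnn p hp)).1) ?_ ?_ ?_ ?_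
  · intro p hp
    obtain ⟨ip, kp, hip, hkp, hh, hl, _⟩ := flow_path_facts hr1 hr2 hr3 hF hp
    have e1 : p.head (hnn p hp) = (ip, ⟨0, ip.pos⟩) :=
      Option.some.inj ((List.head?_eq_head (hnn p hp)).symm.trans hh)
    show (p.head (hnn p hp)).1 ∈ intv n a r
    rw [e1]
    exact hip
  · intro p hp q hq he
    obtain ⟨ip, kp, hip, hkp, hh, _, _⟩ := flow_path_facts hr1 hr2 hr3 hF hp
    obtain ⟨iq, kq, hiq, hkq, hh', _, _⟩ := flow_path_facts hr1 hr2 hr3 hF hq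
    have e1 : p.head (hnn p hp) = (ip, ⟨0, ip.pos⟩) :=
      Option.some.inj ((List.head?_eq_head (hnn p hp)).symm.trans hh)
    have e2 : q.head (hnn q hq) = (iq, ⟨0, iq.pos⟩) :=
      Option.some.inj ((List.head?_eq_head (hnn q hq)).symm.trans hh')
    have he2 : (p.head (hnn p hp)).1 = (q.head (hnn q hq)).1 := he
    rw [e1, e2] at he2
    have he' : ip = iq := he2
    subst he'
    by_contra hne
    have hm1 : (ip, (⟨0, ip.pos⟩ : Fin n)) ∈ p := by rw [← e1]; exact List.head_mem _
    have hm2 : (ip, (⟨0, ip.pos⟩ : Fin n)) ∈ q := by rw [← e2]; exact List.head_mem _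
    exact hF.1.2 p hp q hq hne _ hm1 hm2
  · intro i hi
    obtain ⟨p, hp, hh⟩ := hF.2.2.2.1 i hi
    rw [src_eq] at hh
    have e1 : p.head (hnn p hp) = (i, ⟨0, i.pos⟩) :=
      Option.some.inj ((List.head?_eq_head (hnn p hp)).symm.trans hh)
    refine ⟨p, hp, ?_⟩
    show (p.head (hnn p hp)).1 = i
    rw [e1]
  · intro p hp
    obtain ⟨ip, kp, hip, hkp, hh, hl, hlen⟩ := flow_path_facts hr1 hr2 hr3 hF hp
    have e1 : p.head (hnn p hp) = (ip, ⟨0, ip.pos⟩) :=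
      Option.some.inj ((List.head?_eq_head (hnn p hp)).symm.trans hh)
    show p.toFinset.card = ((p.head (hnn p hp)).1 : Fin n).1 + 1
    rw [List.card_toFinset, List.dedup_eq_self.mpr (hF.1.1 p hp).2.1, hlen, e1]

lemma flowVerts_eq_rect : flowVerts Φ = rect n a r := by
  apply Finset.eq_of_subset_of_card_le (flowVerts_sub_rect hr1 hr2 hr3 hF)
  have h0 : (rect n a r).card = ∑ i ∈ intv n a r, (i.1 + 1) := by
    rw [← flowVerts_Phi0 hr1 hr2 hr3]
    exact card_flowVerts hr1 hr2 hr3 (isflow_Phi0 hr1 hr2 hr3)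
  rw [h0, card_flowVerts hr1 hr2 hr3 hF]

end GridFlowAny
section GridUnique

variable {n a r : ℕ} (hr1 : 1 ≤ a) (hr2 : a ≤ r) (hr3 : r ≤ n)
variable {Φ : Finset (List (Fin n × Fin n))} (hF : IsFlow (gridN n) (intv n a r) Φ)

include hr1 hr2 hr3 hF

lemma hooks_mem_flow : ∀ k, k ≤ r - a → hook n a k ∈ Φ := by
  intro k
  induction k using Nat.strong_induction_on with
  | _ k IH =>
  intro hk
  have hak : a + k ≤ n := by omega
  have hVerts : flowVerts Φ = rect n a r := flowVerts_eq_rect hr1 hr2 hr3 hF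
  -- the path starting at source (a-1+k, 0)
  have hiI : (⟨a - 1 + k, by omega⟩ : Fin n) ∈ intv n a r :=
    mem_intv.mpr ⟨show a ≤ a - 1 + k + 1 by omega, show a - 1 + k + 1 ≤ r by omega⟩
  obtain ⟨P, hPF, hPhead⟩ := hF.2.2.2.1 ⟨a - 1 + k, by omega⟩ hiI
  rw [src_eq] at hPhead
  obtain ⟨hPne, hPnd, hPch⟩ := hF.1.1 P hPF
  obtain ⟨_, ⟨kk, hkkc, hPlast⟩⟩ := hF.2.2.1 P hPF
  rw [snk_eq] at hPlast
  rw [card_intv hr1 hr2 hr3] at hkkc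
  have hPheadmem : ((⟨a - 1 + k, by omega⟩ : Fin n), (⟨0, by omega⟩ : Fin n)) ∈ P := by
    have := head?_some_iff.mp hPhead
    obtain ⟨h0, hg⟩ := this
    have : ((⟨a - 1 + k, by omega⟩ : Fin n), (⟨0, by omega⟩ : Fin n))
        = P.get ⟨0, h0⟩ := by rw [hg]
    rw [this]
    exact List.get_mem P _
  -- claim A : any vertex of any non-hook path with column < k has row ≥ a-1+k
  have claimA : ∀ Q ∈ Φ, (∀ j, j < k → Q ≠ hook n a j) → ∀ v, v ∈ Q → v.2.1 < k →
      a - 1 + k ≤ v.1.1 := by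
    intro Q hQ hnh v hvQ hcol
    by_contra hcon
    push_neg at hcon
    have hvrect : v ∈ rect n a r := by
      rw [← hVerts]
      simp only [flowVerts, Finset.mem_biUnion, List.mem_toFinset]
      exact ⟨Q, hQ, hvQ⟩
    rw [mem_rect] at hvrect
    obtain ⟨hcr, hvr, hvc⟩ := hvrect
    by_cases hcase : v.1.1 ≤ a - 1 + v.2.1
    · have hjk : v.2.1 < k := hcol
      have hve : v ∈ hook n a v.2.1 :=
        (hook_mem hr1 (by omega)).mpr (Or.inr ⟨rfl, hcr, hcase⟩)
      exact hF.1.2 Q hQ (hook n a v.2.1) (IH v.2.1 hjk (by omega)) (hnh v.2.1 hjk)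
        v hvQ hve
    · have hjk : v.1.1 + 1 - a < k := by omega
      have hve : v ∈ hook n a (v.1.1 + 1 - a) :=
        (hook_mem hr1 (by omega)).mpr (Or.inl ⟨by omega, by omega⟩)
      exact hF.1.2 Q hQ (hook n a (v.1.1 + 1 - a)) (IH _ hjk (by omega)) (hnh _ hjk)
        v hvQ hve
  -- P is not an earlier hook
  have hPnotHook : ∀ j, j < k → P ≠ hook n a j := by
    intro j hj heq
    have e2 := hook_head? hr1 (show a + j ≤ n by omega)
    rw [heq, e2] at hPhead
    have h2 := (Prod.ext_iff.mp (Option.some.inj hPhead)).1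
    have h3 : a - 1 + j = a - 1 + k := congrArg Fin.val h2
    omega
  -- vertices of P with column < k are in row a-1+k exactly
  have claimAP : ∀ v, v ∈ P → v.2.1 < k → v.1.1 = a - 1 + k := by
    intro v hv hcol
    have h1 := claimA P hPF hPnotHook v hv hcol
    have h2 : v.1.1 ≤ a - 1 + k := (path_mem_facts hPch hPhead hPlast hv).2.2.2
    omega
  -- the corner (a-1+k, k) lies on P
  have hcorner : ((⟨a - 1 + k, by omega⟩ : Fin n), (⟨k, by omega⟩ : Fin n)) ∈ P := by
    by_cases hk0 : k = 0
    · subst hk0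
      exact hPheadmem
    · have hzmem : ((kk, kk) : Fin n × Fin n) ∈ P := by
        obtain ⟨h0, hg⟩ := getLast?_some_iff.mp hPlast
        rw [← hg]; exact List.get_mem P _
      have hzcol : k ≤ kk.1 := by
        by_contra hcon
        push_neg at hcon
        have hthis : kk.1 = a - 1 + k := claimAP (kk, kk) hzmem hcon
        omega
      obtain ⟨w, z, hw, hz, hstep, hwcol, hzcol'⟩ :=
        exists_col_entry P hPch _ hPhead k (show (0:ℕ) < k by omega) (kk, kk) hzmem hzcol
      have hsf := step_facts hstep
      rcases step_cases hstep with ⟨e1, e2⟩ | ⟨e1, e2⟩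
      · omega
      · have hwrow : w.1.1 = a - 1 + k := claimAP w hw (by omega)
        have : z = ((⟨a - 1 + k, by omega⟩ : Fin n), (⟨k, by omega⟩ : Fin n)) :=
          vert_ext (show z.1.1 = a - 1 + k by omega) (show z.2.1 = k by omega)
        rw [← this]
        exact hz
  -- the sink vertex (k,k) lies on P
  have hsink : ((⟨k, by omega⟩ : Fin n), (⟨k, by omega⟩ : Fin n)) ∈ P := by
    have hsrect : ((⟨k, by omega⟩ : Fin n), (⟨k, by omega⟩ : Fin n)) ∈ rect n a r :=
      mem_rect.mpr ⟨le_refl k, show k + 1 ≤ r by omega, show k + 1 ≤ r - a + 1 by omega⟩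
    rw [← hVerts] at hsrect
    simp only [flowVerts, Finset.mem_biUnion, List.mem_toFinset] at hsrect
    obtain ⟨R, hRF, hsvR⟩ := hsrect
    obtain ⟨hRne, hRnd, hRch⟩ := hF.1.1 R hRF
    have hRnotHook : ∀ j, j < k → R ≠ hook n a j := by
      intro j hj heq
      rw [heq] at hsvR
      have hmm : (k = a - 1 + j ∧ k ≤ j) ∨ (k = j ∧ j ≤ k ∧ k ≤ a - 1 + j) :=
        (hook_mem hr1 (show a + j ≤ n by omega)).mp hsvR
      omega
    obtain ⟨⟨iR, hiR, hRhead⟩, _⟩ := hF.2.2.1 R hRF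
    rw [src_eq] at hRhead
    obtain ⟨hiR1, hiR2⟩ := mem_intv.mp hiR
    -- going upwards in column k inside R
    have hup : ∀ d, d ≤ a - 1 → ∀ v : Fin n × Fin n,
        v.1.1 = k + d → v.2.1 = k → v ∈ R := by
      intro d
      induction d with
      | zero =>
        intro _ v hv1 hv2
        have : v = ((⟨k, by omega⟩ : Fin n), (⟨k, by omega⟩ : Fin n)) :=
          vert_ext (show v.1.1 = k by omega) (show v.2.1 = k by omega)
        rw [this]; exact hsvR
      | succ d ihd =>
        intro hd v hv1 hv2
        have hda : d ≤ a - 1 := by omega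
        have hprev : ((⟨k + d, by omega⟩ : Fin n), (⟨k, by omega⟩ : Fin n)) ∈ R :=
          ihd hda _ rfl rfl
        have hneq : R.head? ≠ some ((⟨k + d, by omega⟩ : Fin n), (⟨k, by omega⟩ : Fin n)) := by
          intro heq
          rw [hRhead] at heq
          have hpe := Option.some.inj heq
          have c1 : iR.1 = k + d := congrArg (fun x => x.1.1) hpe
          have c2 : (0 : ℕ) = k := congrArg (fun x => x.2.1) hpe
          omega
        obtain ⟨w, hwR, hstep⟩ := exists_pred R hRch _ hprev hneq
        have hsf := step_facts hstep
        rcases step_cases hstep with ⟨e1, e2⟩ | ⟨e1, e2⟩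
        · have e1' : w.1.1 = k + d + 1 := e1
          have e2' : w.2.1 = k := e2
          have : v = w := vert_ext (show v.1.1 = w.1.1 by omega) (show v.2.1 = w.2.1 by omega)
          rw [this]; exact hwR
        · -- entered from the left: impossible since row too small
          exfalso
          have e1' : w.1.1 = k + d := e1
          have e2' : k = w.2.1 + 1 := e2
          have hwcol : w.2.1 < k := by omega
          have := claimA R hRF hRnotHook w hwR hwcol
          omega
    have hcornerR : ((⟨a - 1 + k, by omega⟩ : Fin n), (⟨k, by omega⟩ : Fin n)) ∈ R :=
      hup (a - 1) le_rfl _ (show a - 1 + k = k + (a - 1) by omega) rfl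
    have hRP : R = P := by
      by_contra hne
      exact hF.1.2 R hRF P hPF hne _ hcornerR hcorner
    rw [← hRP]
    exact hsvR
  -- the last vertex of P is (k,k)
  have hlast_eq : ((kk, kk) : Fin n × Fin n)
      = ((⟨k, by omega⟩ : Fin n), (⟨k, by omega⟩ : Fin n)) := by
    have := eq_last_of_fvv_le hPch hPlast hsink (show k - k ≤ kk.1 - kk.1 by omega)
    exact this.symm
  have hPlast' : P.getLast? = some ((⟨k, by omega⟩ : Fin n), (⟨k, by omega⟩ : Fin n)) := by
    rw [hPlast, hlast_eq]
  -- P is contained in the hook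
  have hsub : ∀ v ∈ P, v ∈ hook n a k := by
    intro v hv
    have mf := path_mem_facts hPch hPhead hPlast' hv
    have mf2 : v.2.1 ≤ k := mf.2.1
    have mf3 : k ≤ v.1.1 := mf.2.2.1
    have mf4 : v.1.1 ≤ a - 1 + k := mf.2.2.2
    rw [hook_mem hr1 hak]
    by_cases hcol : v.2.1 < k
    · exact Or.inl ⟨claimAP v hv hcol, by omega⟩
    · exact Or.inr ⟨by omega, by omega, by omega⟩
  -- conclude P = hook
  have hlenP : P.length = a + k := by
    have hthis : a - 1 + k - 0 = k - k + (P.length - 1) := path_len hPch hPhead hPlast'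
    have hpos : 0 < P.length := List.length_pos_iff.mpr hPne
    omega
  have htf : P.toFinset = (hook n a k).toFinset := by
    apply Finset.eq_of_subset_of_card_le
    · intro v hv
      exact List.mem_toFinset.mpr (hsub v (List.mem_toFinset.mp hv))
    · have c1 : P.toFinset.card = a + k := by
        rw [List.card_toFinset, List.dedup_eq_self.mpr hPnd, hlenP]
      have c2 : (hook n a k).toFinset.card = a + k := by
        rw [List.card_toFinset, List.dedup_eq_self.mpr (path_nodup (hook_chain' hr1 hak)),
          hook_length hr1 hak]
      omega
  have := chain_eq_of_toFinset_eq P (hook n a k) hPch (hook_chain' hr1 hak) htf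
  rw [← this]
  exact hPF

lemma flow_unique : Φ = Phi0 n a r := by
  have hsub : Phi0 n a r ⊆ Φ := by
    intro p hp
    obtain ⟨k, hk, rfl⟩ := (mem_Phi0 hr2).mp hp
    exact hooks_mem_flow hr1 hr2 hr3 hF k hk
  refine (Finset.eq_of_subset_of_card_le hsub ?_).symm
  rw [hF.2.1, card_intv hr1 hr2 hr3, card_Phi0 hr1 hr2 hr3]

end GridUnique

/-- In the half-grid `Γₙ`, every nonempty interval `I = [a..r] ⊆ [n]` admits exactly one
`I`-flow; it passes exactly through the vertices `(i,j)` with `j ≤ i ≤ r` and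
`1 ≤ j ≤ r-a+1`, so that for any weighting `w` in a commutative semiring,
`f_w([a..r]) = ⊙_{j ≤ i ≤ r, 1 ≤ j ≤ r-a+1} w(i,j)`. -/
theorem stmt19 {S : Type} [CommSemiring S] (n a r : ℕ)
    (h1 : 1 ≤ a) (h2 : a ≤ r) (h3 : r ≤ n) (w : Fin n × Fin n → S) :
    (∃! Φ : Finset (List (Fin n × Fin n)), IsFlow (gridN n) (intv n a r) Φ) ∧
    (∀ Φ : Finset (List (Fin n × Fin n)), IsFlow (gridN n) (intv n a r) Φ →
        flowVerts Φ = rect n a r) ∧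
    flowGen (gridN n) w (intv n a r) = ∏ v ∈ rect n a r, w v := by
  refine ⟨⟨Phi0 n a r, isflow_Phi0 h1 h2 h3, fun Φ hΦ => flow_unique h1 h2 h3 hΦ⟩,
    fun Φ hΦ => flowVerts_eq_rect h1 h2 h3 hΦ, ?_⟩
  have hz : ∀ Φ' : Finset (List (Fin n × Fin n)), Φ' ≠ Phi0 n a r →
      (∑ᶠ (_ : IsFlow (gridN n) (intv n a r) Φ'), ∏ v ∈ flowVerts Φ', w v) = 0 := by
    intro Φ' hne
    rw [finsum_eq_if, if_neg]
    intro hflow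
    exact hne (flow_unique h1 h2 h3 hflow)
  rw [flowGen, finsum_eq_single _ (Phi0 n a r) hz, finsum_eq_if,
    if_pos (isflow_Phi0 h1 h2 h3), flowVerts_Phi0 h1 h2 h3]
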